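/- For any countable subset Γ of SL(2,ℝ)×SL(2,ℝ), there exists (g₁,g₂) ∈ SL(2,ℝ)×SL(2,ℝ) such that ‖g₁⁻¹ γ₁ g₁‖ ≠ ‖g₂⁻¹ γ₂ g₂‖ for every non-central element γ = (γ₁,γ₂) ∈ Γ. -/

import Mathlib

open Real

noncomputable section

abbrev SL2 := Matrix.SpecialLinearGroup (Fin 2) ℝ

/-- inverse hyperbolic cosine -/
def acosh (x : ℝ) : ℝ := Real.log (x + Real.sqrt (x ^ 2 - 1))

/-- the "pseudo-distance from the origin" ‖g‖ = arcosh((g₁₁²+g₁₂²+g₂₁²+g₂₂²)/2) -/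
def gnorm (g : SL2) : ℝ :=
  acosh ((g.1 0 0 ^ 2 + g.1 0 1 ^ 2 + g.1 1 0 ^ 2 + g.1 1 1 ^ 2) / 2)

def z1 (x : SL2) : ℂ :=
  (((x.1 0 0 + x.1 1 1 : ℝ) : ℂ) + Complex.I * ((x.1 1 0 - x.1 0 1 : ℝ) : ℂ)) / 2

def z2 (x : SL2) : ℂ :=
  (((x.1 0 1 + x.1 1 0 : ℝ) : ℂ) + Complex.I * ((x.1 0 0 - x.1 1 1 : ℝ) : ℂ)) / 2

/-- the spherical function ψ_{m,k}(x) = z₁(x)^{-(k+2m)} z₂(x)^k -/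
def psi (m k : ℕ) (x : SL2) : ℂ := z1 x ^ (-(k + 2 * m : ℤ)) * z2 x ^ k

/-- γ is central iff both components are ±1 -/
def IsCentral (γ : SL2 × SL2) : Prop :=
  (γ.1.1 = 1 ∨ γ.1.1 = -1) ∧ (γ.2.1 = 1 ∨ γ.2.1 = -1)

/-- ε_Γ -/
def epsGamma (Γ : Set (SL2 × SL2)) : ℝ :=
  (1 / 3) * sInf {r | ∃ γ ∈ Γ, ¬IsCentral γ ∧ r = |gnorm γ.1 - gnorm γ.2|}

/-- the set counted by N_Γ(x,R) -/
def orbitSet (Γ : Set (SL2 × SL2)) (x : SL2) (R : ℝ) : Set (SL2 × SL2) :=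
  {γ | γ ∈ Γ ∧ gnorm (γ.1 * x * γ.2⁻¹) ≤ R}

/-- the constant m(C,α,ε,s) -/
def mConst (C α ε : ℝ) (s : ℕ) : ℝ :=
  (Real.log 2 * s + 2 * α * ε + Real.log (1 + 2 ^ s * C * Real.exp (6 * α * ε))) /
    Real.log (Real.cosh ε)

def chi (x : ℝ) : ℝ := if x = 1 then 0 else 1

/-- θ_{a,N} for a tuple a of length k (with the convention a_{-1} = 1) -/
def thetaAN (a : ℕ → ℝ) (k : ℕ) (N : ℝ) : ℝ :=
  Real.pi * ∑ i ∈ Finset.range k,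
    (chi (a i) - if i = 0 then 0 else chi (a (i - 1))) * N ^ (-(i : ℤ))

/-- the sign tuple a(b) attached to b -/
def signOf (b : ℕ → ℝ) (j : ℕ) : ℝ := if 0 ≤ b j then 1 else -1

/-- ψ_{m,b} = Σ_{j<k} b_j ψ_{m,3^j} -/
def psiB (m k : ℕ) (b : ℕ → ℝ) (x : SL2) : ℂ :=
  ∑ j ∈ Finset.range k, (b j : ℂ) * psi m (3 ^ j) x

/-- f_b(u) = Σ_{j<k} b_j cos(3^j θ_{a(b),3}) u^{3^j} -/
def fb (k : ℕ) (b : ℕ → ℝ) (u : ℝ) : ℝ :=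
  ∑ j ∈ Finset.range k, b j * Real.cos (3 ^ j * thetaAN (signOf b) k 3) * u ^ 3 ^ j

/-- the rotation matrix k(θ) -/
def kMat (θ : ℝ) : SL2 :=
  ⟨!![Real.cos θ, -Real.sin θ; Real.sin θ, Real.cos θ], by
    simp [Matrix.det_fin_two_of]
    nlinarith [Real.sin_sq_add_cos_sq θ]⟩

/-- the diagonal matrix a(t) -/
def aMat (t : ℝ) : SL2 :=
  ⟨!![Real.exp t, 0; 0, Real.exp (-t)], by
    simp [Matrix.det_fin_two_of, ← Real.exp_add]⟩

end
noncomputable section StmtNineAux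

def nMat (x : ℝ) : SL2 :=
  ⟨!![1, 0; x, 1], by simp [Matrix.det_fin_two_of]⟩

def Fsum (M : SL2) : ℝ := M.1 0 0 ^ 2 + M.1 0 1 ^ 2 + M.1 1 0 ^ 2 + M.1 1 1 ^ 2

lemma fsum_ge_two (M : SL2) : 2 ≤ Fsum M := by
  have hd := M.2
  rw [Matrix.det_fin_two] at hd
  unfold Fsum
  nlinarith [sq_nonneg (M.1 0 0 - M.1 1 1), sq_nonneg (M.1 0 1 + M.1 1 0)]

lemma acosh_lt {x y : ℝ} (hx : 1 ≤ x) (hxy : x < y) : acosh x < acosh y := by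
  unfold acosh
  apply Real.log_lt_log
  · have := Real.sqrt_nonneg (x ^ 2 - 1); linarith
  · have h1 : Real.sqrt (x ^ 2 - 1) ≤ Real.sqrt (y ^ 2 - 1) :=
      Real.sqrt_le_sqrt (by nlinarith)
    linarith

lemma gnorm_ne {M N : SL2} (h : Fsum M ≠ Fsum N) : gnorm M ≠ gnorm N := by
  have hM := fsum_ge_two M
  have hN := fsum_ge_two N
  have hgn : ∀ K : SL2, gnorm K = acosh (Fsum K / 2) := fun K => rfl
  rw [hgn M, hgn N]
  rcases lt_or_gt_of_ne h with hlt | hlt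
  · exact ne_of_lt (acosh_lt (by linarith) (by linarith))
  · exact (ne_of_lt (acosh_lt (by linarith) (by linarith))).symm

lemma na_inv (x t : ℝ) : (nMat x * aMat t)⁻¹ = aMat (-t) * nMat (-x) := by
  symm
  rw [eq_inv_iff_mul_eq_one]
  ext i j
  change ((aMat (-t)).1 * (nMat (-x)).1 * ((nMat x).1 * (aMat t).1)) i j = (1 : SL2).1 i j
  fin_cases i <;> fin_cases j <;>
    simp [nMat, aMat, Matrix.mul_fin_two, ← Real.exp_add] <;> ring

/-- the quadratic polynomial whose square is the coefficient of e^{4t} -/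
def Pq (m : SL2) (x : ℝ) : ℝ := m.1 1 0 + (m.1 1 1 - m.1 0 0) * x - m.1 0 1 * x ^ 2

def Ffun (x t : ℝ) (m : SL2) : ℝ :=
  (m.1 0 0 + m.1 0 1 * x) ^ 2 + (m.1 1 1 - m.1 0 1 * x) ^ 2
    + m.1 0 1 ^ 2 * Real.exp (-(4 * t))
    + Pq m x ^ 2 * Real.exp (4 * t)

lemma fsum_conj (γ : SL2) (x t : ℝ) :
    Fsum ((nMat x * aMat t)⁻¹ * γ * (nMat x * aMat t)) = Ffun x t γ := by
  rw [na_inv]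
  have hγ : γ.1 = !![γ.1 0 0, γ.1 0 1; γ.1 1 0, γ.1 1 1] := (Matrix.etaExpand_eq γ.1).symm
  unfold Fsum Ffun Pq
  simp only [Matrix.SpecialLinearGroup.coe_mul]
  rw [hγ]
  have h4 : Real.exp (4 * t) = Real.exp t ^ 4 := by
    rw [← Real.exp_nat_mul]; norm_num
  have h4' : Real.exp (-(4 * t)) = (Real.exp t ^ 4)⁻¹ := by
    rw [← h4, ← Real.exp_neg]
  simp [nMat, aMat, Matrix.mul_fin_two, Real.exp_neg, h4, h4']
  field_simp
  ring

lemma quad_finite {α β δ : ℝ} (h : ¬(α = 0 ∧ β = 0 ∧ δ = 0)) :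
    {x : ℝ | α * x ^ 2 + β * x + δ = 0}.Finite := by
  have hp : (Polynomial.C α * Polynomial.X ^ 2 + Polynomial.C β * Polynomial.X
      + Polynomial.C δ : Polynomial ℝ) ≠ 0 := by
    intro hc
    apply h
    refine ⟨?_, ?_, ?_⟩
    · have := congrArg (fun p => Polynomial.coeff p 2) hc; simpa using this
    · have := congrArg (fun p => Polynomial.coeff p 1) hc; simpa using this
    · have := congrArg (fun p => Polynomial.coeff p 0) hc; simpa using this
  have := Polynomial.finite_setOf_isRoot hp
  convert this using 1
  ext x
  simp [Polynomial.IsRoot]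

lemma texp_finite {A B Cc c : ℝ} (hC : Cc ≠ 0) :
    {t : ℝ | A + B * Real.exp (-(4 * t)) + Cc * Real.exp (4 * t) = c}.Finite := by
  have hroot : {y : ℝ | Cc * y ^ 2 + (A - c) * y + B = 0}.Finite :=
    quad_finite (by tauto)
  have hinj : Function.Injective (fun t : ℝ => Real.exp (4 * t)) := by
    intro s t hst
    have := Real.exp_injective hst
    linarith
  have hsub : {t : ℝ | A + B * Real.exp (-(4 * t)) + Cc * Real.exp (4 * t) = c} ⊆
      (fun t : ℝ => Real.exp (4 * t)) ⁻¹' {y : ℝ | Cc * y ^ 2 + (A - c) * y + B = 0} := by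
    intro t ht
    simp only [Set.mem_setOf_eq, Set.mem_preimage] at ht ⊢
    have hy : Real.exp (4 * t) ≠ 0 := Real.exp_ne_zero _
    have hn : Real.exp (-(4 * t)) = (Real.exp (4 * t))⁻¹ := Real.exp_neg _
    rw [hn] at ht
    field_simp at ht
    linear_combination ht
  exact (hroot.preimage hinj.injOn).subset hsub

lemma exists_not_mem_countable {s : Set ℝ} (h : s.Countable) : ∃ x, x ∉ s := by
  by_contra hc
  push_neg at hc
  exact Cardinal.not_countable_real (h.mono fun x _ => hc x)

lemma Pq_roots_finite (m : SL2) (h : ¬(m.1 = 1 ∨ m.1 = -1)) :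
    {x : ℝ | Pq m x = 0}.Finite := by
  have hset : {x : ℝ | Pq m x = 0} =
      {x : ℝ | (-(m.1 0 1)) * x ^ 2 + (m.1 1 1 - m.1 0 0) * x + m.1 1 0 = 0} := by
    ext x
    simp only [Set.mem_setOf_eq, Pq]
    constructor <;> intro hx <;> linarith
  rw [hset]
  apply quad_finite
  rintro ⟨h1, h2, h3⟩
  apply h
  have hb : m.1 0 1 = 0 := by linarith
  have had : m.1 1 1 = m.1 0 0 := by linarith
  have hd := m.2
  rw [Matrix.det_fin_two] at hd
  have h00 : (m.1 0 0 - 1) * (m.1 0 0 + 1) = 0 := by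
    linear_combination hd - m.1 0 0 * h2 + m.1 0 1 * h3
  have hm : m.1 = !![m.1 0 0, m.1 0 1; m.1 1 0, m.1 1 1] := (Matrix.etaExpand_eq m.1).symm
  rcases mul_eq_zero.1 h00 with h' | h'
  · left
    rw [hm, hb, h3, had]
    have : m.1 0 0 = 1 := by linarith
    rw [this]
    ext i j
    fin_cases i <;> fin_cases j <;> simp [Matrix.one_apply]
  · right
    rw [hm, hb, h3, had]
    have : m.1 0 0 = -1 := by linarith
    rw [this]
    ext i j
    fin_cases i <;> fin_cases j <;> simp [Matrix.one_apply, Matrix.neg_apply]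

lemma ffun_finite (x : ℝ) (m : SL2) (h : Pq m x ≠ 0) (c : ℝ) :
    {t : ℝ | Ffun x t m = c}.Finite := by
  simp only [Ffun]
  exact texp_finite (pow_ne_zero 2 h)

lemma fsum_central (g c : SL2) (h : c.1 = 1 ∨ c.1 = -1) : Fsum (g⁻¹ * c * g) = 2 := by
  have hgg : (g⁻¹).1 * g.1 = (1 : Matrix (Fin 2) (Fin 2) ℝ) := by
    rw [← Matrix.SpecialLinearGroup.coe_mul, inv_mul_cancel,
      Matrix.SpecialLinearGroup.coe_one]
  have hcoe : ((g⁻¹ * c * g : SL2) : Matrix (Fin 2) (Fin 2) ℝ) = (g⁻¹).1 * c.1 * g.1 := by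
    simp [Matrix.SpecialLinearGroup.coe_mul]
  rcases h with h | h
  · have h1 : ((g⁻¹ * c * g : SL2) : Matrix (Fin 2) (Fin 2) ℝ) = 1 := by
      rw [hcoe, h, mul_one, hgg]
    unfold Fsum
    rw [h1]
    norm_num [Matrix.one_fin_two]
  · have h1 : ((g⁻¹ * c * g : SL2) : Matrix (Fin 2) (Fin 2) ℝ) = -1 := by
      rw [hcoe, h, mul_neg_one, Matrix.neg_mul, hgg]
    unfold Fsum
    rw [h1]
    norm_num [Matrix.one_fin_two]

end StmtNineAux

theorem stmt9 (Γ : Set (SL2 × SL2)) (hΓ : Γ.Countable) :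
    ∃ g : SL2 × SL2, ∀ γ ∈ Γ, ¬IsCentral γ →
      gnorm (g.1⁻¹ * γ.1 * g.1) ≠ gnorm (g.2⁻¹ * γ.2 * g.2) := by
  classical
  -- Step 1: choose x₀ avoiding the roots of all the quadratics Pq γᵢ
  set badx : SL2 → Set ℝ := fun m => {x | ¬(m.1 = 1 ∨ m.1 = -1) ∧ Pq m x = 0} with hbadx
  have badx_fin : ∀ m : SL2, (badx m).Finite := by
    intro m
    by_cases h : (m.1 = 1 ∨ m.1 = -1)
    · have : badx m = ∅ := by
        ext x
        simp only [hbadx, Set.mem_setOf_eq, Set.mem_empty_iff_false, iff_false]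
        intro hc; exact hc.1 h
      rw [this]; exact Set.finite_empty
    · exact (Pq_roots_finite m h).subset fun x hx => hx.2
  have hBX : (⋃ γ ∈ Γ, (badx γ.1 ∪ badx γ.2)).Countable :=
    hΓ.biUnion fun γ _ => ((badx_fin γ.1).union (badx_fin γ.2)).countable
  obtain ⟨x₀, hx₀⟩ := exists_not_mem_countable hBX
  have hx' : ∀ γ ∈ Γ, x₀ ∉ badx γ.1 ∧ x₀ ∉ badx γ.2 := by
    intro γ hγ
    constructor
    · intro hc; exact hx₀ (Set.mem_biUnion hγ (Set.mem_union_left _ hc))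
    · intro hc; exact hx₀ (Set.mem_biUnion hγ (Set.mem_union_right _ hc))
  -- Step 2: choose t₁
  have ht1C : (⋃ γ ∈ Γ, {t : ℝ | (¬(γ.1.1 = 1 ∨ γ.1.1 = -1) ∧ (γ.2.1 = 1 ∨ γ.2.1 = -1))
      ∧ Ffun x₀ t γ.1 = 2}).Countable := by
    apply hΓ.biUnion
    intro γ hγ
    by_cases h : ¬(γ.1.1 = 1 ∨ γ.1.1 = -1)
    · have hP : Pq γ.1 x₀ ≠ 0 := fun hc => (hx' γ hγ).1 ⟨h, hc⟩
      exact ((ffun_finite x₀ γ.1 hP 2).subset fun t ht => ht.2).countable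
    · have : {t : ℝ | (¬(γ.1.1 = 1 ∨ γ.1.1 = -1) ∧ (γ.2.1 = 1 ∨ γ.2.1 = -1))
          ∧ Ffun x₀ t γ.1 = 2} = ∅ := by
        ext t; simp only [Set.mem_setOf_eq, Set.mem_empty_iff_false, iff_false]
        intro hc; exact h hc.1.1
      rw [this]; exact Set.countable_empty
  obtain ⟨t₁, ht₁⟩ := exists_not_mem_countable ht1C
  -- Step 3: choose t₂
  have ht2C : (⋃ γ ∈ Γ, {t : ℝ | ¬(γ.2.1 = 1 ∨ γ.2.1 = -1)
      ∧ Ffun x₀ t γ.2 = Ffun x₀ t₁ γ.1}).Countable := by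
    apply hΓ.biUnion
    intro γ hγ
    by_cases h : ¬(γ.2.1 = 1 ∨ γ.2.1 = -1)
    · have hP : Pq γ.2 x₀ ≠ 0 := fun hc => (hx' γ hγ).2 ⟨h, hc⟩
      exact ((ffun_finite x₀ γ.2 hP _).subset fun t ht => ht.2).countable
    · have : {t : ℝ | ¬(γ.2.1 = 1 ∨ γ.2.1 = -1) ∧ Ffun x₀ t γ.2 = Ffun x₀ t₁ γ.1} = ∅ := by
        ext t; simp only [Set.mem_setOf_eq, Set.mem_empty_iff_false, iff_false]
        intro hc; exact h hc.1
      rw [this]; exact Set.countable_empty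
  obtain ⟨t₂, ht₂⟩ := exists_not_mem_countable ht2C
  -- conclusion
  refine ⟨(nMat x₀ * aMat t₁, nMat x₀ * aMat t₂), ?_⟩
  intro γ hγ hnc
  apply gnorm_ne
  by_cases h2 : (γ.2.1 = 1 ∨ γ.2.1 = -1)
  · have h1 : ¬(γ.1.1 = 1 ∨ γ.1.1 = -1) := fun hc => hnc ⟨hc, h2⟩
    show Fsum ((nMat x₀ * aMat t₁)⁻¹ * γ.1 * (nMat x₀ * aMat t₁)) ≠
      Fsum ((nMat x₀ * aMat t₂)⁻¹ * γ.2 * (nMat x₀ * aMat t₂))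
    rw [fsum_central _ _ h2, fsum_conj]
    intro hc
    exact ht₁ (Set.mem_biUnion hγ ⟨⟨h1, h2⟩, hc⟩)
  · show Fsum ((nMat x₀ * aMat t₁)⁻¹ * γ.1 * (nMat x₀ * aMat t₁)) ≠
      Fsum ((nMat x₀ * aMat t₂)⁻¹ * γ.2 * (nMat x₀ * aMat t₂))
    rw [fsum_conj, fsum_conj]
    intro hc
    exact ht₂ (Set.mem_biUnion hγ ⟨h2, hc.symm⟩)
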